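/- Let A : ℝ^{m×n} → ℝ^p satisfy the rank-RIP with constant δ_k, let S be a set of orthonormal rank-1 matrices with rank(P_S X) ≤ k for all X, and let μ > 0. Then every eigenvalue of the self-adjoint operator μ P_S A* A P_S restricted to span(S) lies in [μ(1−δ_k), μ(1+δ_k)], and consequently for all X ∈ ℝ^{m×n}, ‖(I − μ P_S A* A P_S) P_S X‖_F ≤ max{μ(1+δ_k) − 1, 1 − μ(1−δ_k)} ‖P_S X‖_F. -/

import Mathlib

open scoped BigOperators

noncomputable def frobInner {m n : ℕ} (X Y : Matrix (Fin m) (Fin n) ℝ) : ℝ :=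
  ∑ i, ∑ j, X i j * Y i j

noncomputable def frobNorm {m n : ℕ} (X : Matrix (Fin m) (Fin n) ℝ) : ℝ :=
  Real.sqrt (frobInner X X)

noncomputable def toE {m n : ℕ} (X : Matrix (Fin m) (Fin n) ℝ) :
    EuclideanSpace ℝ (Fin m × Fin n) := WithLp.toLp 2 (fun q : Fin m × Fin n => X q.1 q.2)

lemma toE_add {m n : ℕ} (X Y : Matrix (Fin m) (Fin n) ℝ) : toE (X + Y) = toE X + toE Y := by ext; simp [toE]
lemma toE_smul {m n : ℕ} (c : ℝ) (X : Matrix (Fin m) (Fin n) ℝ) : toE (c • X) = c • toE X := by ext; simp [toE]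
lemma toE_sub {m n : ℕ} (X Y : Matrix (Fin m) (Fin n) ℝ) : toE (X - Y) = toE X - toE Y := by ext; simp [toE]

lemma frobInner_eq {m n : ℕ} (X Y : Matrix (Fin m) (Fin n) ℝ) :
    frobInner X Y = (inner ℝ (toE X) (toE Y) : ℝ) := by
  rw [PiLp.inner_apply]
  simp only [RCLike.inner_apply, conj_trivial]
  rw [Fintype.sum_prod_type]
  simp only [toE, frobInner, mul_comm]

lemma frobNorm_eq {m n : ℕ} (X : Matrix (Fin m) (Fin n) ℝ) : frobNorm X = ‖toE X‖ := by
  rw [frobNorm, frobInner_eq, real_inner_self_eq_norm_sq, Real.sqrt_sq (norm_nonneg _)]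

lemma toE_eq_zero {m n : ℕ} {X : Matrix (Fin m) (Fin n) ℝ} (h : toE X = 0) : X = 0 := by
  ext i j
  have := congrArg (fun v => v (i, j)) h
  simpa [toE] using this

lemma frobInner_smul_left {m n : ℕ} (c : ℝ) (X Y : Matrix (Fin m) (Fin n) ℝ) :
    frobInner (c • X) Y = c * frobInner X Y := by
  simp only [frobInner_eq, toE_smul, real_inner_smul_left]

lemma frobInner_sub_left {m n : ℕ} (X Y Z : Matrix (Fin m) (Fin n) ℝ) :
    frobInner (X - Y) Z = frobInner X Z - frobInner Y Z := by
  simp only [frobInner_eq, toE_sub, inner_sub_left]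

lemma frobInner_comm {m n : ℕ} (X Y : Matrix (Fin m) (Fin n) ℝ) :
    frobInner X Y = frobInner Y X := by
  simp only [frobInner_eq]; exact real_inner_comm _ _

lemma aux_sqrt {N u r : ℝ} (hN : 0 < N) (hu : 0 < u)
    (h : ∀ t : ℝ, 4 * t * u ≤ 2 * r * (N + t ^ 2 * u)) :
    Real.sqrt u ≤ r * Real.sqrt N := by
  have hsN := Real.sqrt_pos.mpr hN
  have hsu := Real.sqrt_pos.mpr hu
  have ht := h (Real.sqrt N / Real.sqrt u)
  have h1 : (Real.sqrt N / Real.sqrt u) * u = Real.sqrt N * Real.sqrt u := by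
    rw [div_mul_eq_mul_div, mul_div_assoc, Real.div_sqrt]
  have h2 : (Real.sqrt N / Real.sqrt u) ^ 2 * u = N := by
    rw [div_pow, Real.sq_sqrt hN.le, Real.sq_sqrt hu.le, div_mul_cancel₀ _ (ne_of_gt hu)]
  have hN2 : N = Real.sqrt N ^ 2 := (Real.sq_sqrt hN.le).symm
  nlinarith [ht, h1, h2, hsN, hsu]

/-- Eigenvalues of `μ P_S A* A P_S` restricted to `span(S)` lie in
`[μ(1−δ_k), μ(1+δ_k)]`, and consequently
`‖(I − μ P_S A* A P_S) P_S X‖_F ≤ max{μ(1+δ)−1, 1−μ(1−δ)} ‖P_S X‖_F`. -/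
theorem rip_projected_eigenvalue_bounds {m n p k : ℕ}
    (δ μ : ℝ) (hμ : 0 < μ)
    (A : Matrix (Fin m) (Fin n) ℝ →ₗ[ℝ] EuclideanSpace ℝ (Fin p))
    (hRIP : ∀ X : Matrix (Fin m) (Fin n) ℝ, X.rank ≤ k →
      (1 - δ) * frobNorm X ^ 2 ≤ ‖A X‖ ^ 2 ∧ ‖A X‖ ^ 2 ≤ (1 + δ) * frobNorm X ^ 2)
    (Astar : EuclideanSpace ℝ (Fin p) →ₗ[ℝ] Matrix (Fin m) (Fin n) ℝ)
    (hadj : ∀ (X : Matrix (Fin m) (Fin n) ℝ) (v : EuclideanSpace ℝ (Fin p)),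
      (inner ℝ (A X) v : ℝ) = frobInner X (Astar v))
    (P : Matrix (Fin m) (Fin n) ℝ →ₗ[ℝ] Matrix (Fin m) (Fin n) ℝ)
    (hidem : ∀ X, P (P X) = P X)
    (hsa : ∀ X Y, frobInner (P X) Y = frobInner X (P Y))
    (hrank : ∀ X, (P X).rank ≤ k) :
    (∀ (lam : ℝ) (X : Matrix (Fin m) (Fin n) ℝ), X ≠ 0 → P X = X →
      μ • P (Astar (A (P X))) = lam • X →
      lam ∈ Set.Icc (μ * (1 - δ)) (μ * (1 + δ))) ∧
    (∀ X : Matrix (Fin m) (Fin n) ℝ,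
      frobNorm (P X - μ • P (Astar (A (P X)))) ≤
        max (μ * (1 + δ) - 1) (1 - μ * (1 - δ)) * frobNorm (P X)) := by
  -- key adjointness identity
  have key : ∀ Z W : Matrix (Fin m) (Fin n) ℝ,
      frobInner (P (Astar (A (P Z)))) W = (inner ℝ (A (P Z)) (A (P W)) : ℝ) := by
    intro Z W
    rw [hsa, frobInner_comm, ← hadj, real_inner_comm]
  have hfrobsq : ∀ Z : Matrix (Fin m) (Fin n) ℝ, frobNorm Z ^ 2 = frobInner Z Z := by
    intro Z; rw [frobNorm_eq, frobInner_eq, real_inner_self_eq_norm_sq]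
  have hq : ∀ Z : Matrix (Fin m) (Fin n) ℝ, P Z = Z →
      (1 - δ) * frobInner Z Z ≤ ‖A Z‖ ^ 2 ∧ ‖A Z‖ ^ 2 ≤ (1 + δ) * frobInner Z Z := by
    intro Z hZ
    have hr : Z.rank ≤ k := by rw [← hZ]; exact hrank Z
    have := hRIP Z hr
    rwa [hfrobsq] at this
  constructor
  · -- eigenvalue bounds
    intro lam X hX hPX heig
    have hNpos : 0 < frobInner X X := by
      rw [frobInner_eq, real_inner_self_eq_norm_sq]
      exact pow_pos (norm_pos_iff.mpr fun h => hX (toE_eq_zero h)) 2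
    have h2 : frobInner (μ • P (Astar (A (P X)))) X = μ * ‖A X‖ ^ 2 := by
      rw [frobInner_smul_left, key X X, hPX, real_inner_self_eq_norm_sq]
    have h3 : frobInner (lam • X) X = lam * frobInner X X := frobInner_smul_left _ _ _
    have heq : μ * ‖A X‖ ^ 2 = lam * frobInner X X := by
      rw [← h2, heig, h3]
    obtain ⟨hlo, hhi⟩ := hq X hPX
    constructor
    · nlinarith [mul_le_mul_of_nonneg_left hlo hμ.le]
    · nlinarith [mul_le_mul_of_nonneg_left hhi hμ.le]
  · -- norm bound
    intro X
    by_cases hY0 : P X = 0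
    · have hz : P X - μ • P (Astar (A (P X))) = 0 := by
        rw [hY0]; simp
      rw [hz, hY0]
      simp [frobNorm, frobInner]
    · set Y := P X with hYdef
      have hPY : P Y = Y := hidem X
      set G := P (Astar (A Y)) with hGdef
      have hPG : P G = G := hidem _
      have hNpos : 0 < frobInner Y Y := by
        rw [frobInner_eq, real_inner_self_eq_norm_sq]
        exact pow_pos (norm_pos_iff.mpr fun h => hY0 (toE_eq_zero h)) 2
      obtain ⟨hlo, hhi⟩ := hq Y hPY
      have hδ : 0 ≤ δ := by nlinarith
      set D := μ • G - μ • Y with hDdef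
      have hPD : P D = D := by
        rw [hDdef, map_sub, map_smul, map_smul, hPG, hPY]
      -- frobInner G W = ⟪A Y, A (P W)⟫
      have keyG : ∀ W, frobInner G W = (inner ℝ (A Y) (A (P W)) : ℝ) := by
        intro W
        have := key X W
        rw [← hYdef] at this
        exact this
      -- quadratic form bound for elements of the range of P
      have hqb : ∀ Z : Matrix (Fin m) (Fin n) ℝ, P Z = Z →
          |μ * (inner ℝ (A Z) (A Z) : ℝ) - μ * frobInner Z Z| ≤ μ * δ * frobInner Z Z := by
        intro Z hZ
        obtain ⟨h1, h2⟩ := hq Z hZ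
        rw [real_inner_self_eq_norm_sq, abs_le]
        constructor
        · nlinarith [mul_le_mul_of_nonneg_left h1 hμ.le]
        · nlinarith [mul_le_mul_of_nonneg_left h2 hμ.le]
      -- expansions
      have expA : ∀ t : ℝ, (inner ℝ (A (Y + t • D)) (A (Y + t • D)) : ℝ)
          = (inner ℝ (A Y) (A Y) : ℝ) + 2 * t * (inner ℝ (A Y) (A D) : ℝ)
            + t ^ 2 * (inner ℝ (A D) (A D) : ℝ) := by
        intro t
        rw [map_add, map_smul]
        simp only [real_inner_add_add_self, real_inner_smul_left, real_inner_smul_right]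
        ring
      have expF : ∀ t : ℝ, frobInner (Y + t • D) (Y + t • D)
          = frobInner Y Y + 2 * t * frobInner Y D + t ^ 2 * frobInner D D := by
        intro t
        simp only [frobInner_eq, toE_add, toE_smul, real_inner_add_add_self,
          real_inner_smul_left, real_inner_smul_right]
        ring
      have hu : frobInner D D = μ * (inner ℝ (A Y) (A D) : ℝ) - μ * frobInner Y D := by
        rw [hDdef, frobInner_sub_left, frobInner_smul_left, frobInner_smul_left, keyG, hPD]
      -- polarization inequality
      have hpol : ∀ t : ℝ, 4 * t * frobInner D D
          ≤ 2 * μ * δ * (frobInner Y Y + t ^ 2 * frobInner D D) := by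
        intro t
        have hP1 : P (Y + t • D) = Y + t • D := by rw [map_add, map_smul, hPY, hPD]
        have hP2 : P (Y + (-t) • D) = Y + (-t) • D := by rw [map_add, map_smul, hPY, hPD]
        have h1 := hqb _ hP1
        have h2 := hqb _ hP2
        rw [expA t, expF t, abs_le] at h1
        rw [expA (-t), expF (-t), abs_le] at h2
        have step : 4 * t * (μ * (inner ℝ (A Y) (A D) : ℝ) - μ * frobInner Y D)
            ≤ 2 * μ * δ * (frobInner Y Y + t ^ 2 * frobInner D D) := by
          linarith [h1.2, h2.1]
        rw [← hu] at step
        exact step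
      -- norm bound on D
      have hu0 : 0 ≤ frobInner D D := by
        rw [frobInner_eq]; exact real_inner_self_nonneg
      have hD : frobNorm D ≤ μ * δ * frobNorm Y := by
        rcases eq_or_lt_of_le hu0 with h | h
        · rw [frobNorm, ← h, Real.sqrt_zero]
          have := Real.sqrt_nonneg (frobInner Y Y)
          rw [frobNorm]
          positivity
        · rw [frobNorm, frobNorm]
          exact aux_sqrt hNpos h (fun t => by linarith [hpol t])
      -- assemble
      have hid : Y - μ • G = (1 - μ) • Y - D := by
        rw [hDdef]; module
      have habs : |1 - μ| + μ * δ ≤ max (μ * (1 + δ) - 1) (1 - μ * (1 - δ)) := by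
        rcases abs_cases (1 - μ) with ⟨h1, _⟩ | ⟨h1, _⟩
        · exact le_trans (le_of_eq (by rw [h1]; ring)) (le_max_right _ _)
        · exact le_trans (le_of_eq (by rw [h1]; ring)) (le_max_left _ _)
      calc frobNorm (Y - μ • G) = ‖(1 - μ) • toE Y - toE D‖ := by
            rw [hid, frobNorm_eq, toE_sub, toE_smul]
        _ ≤ ‖(1 - μ) • toE Y‖ + ‖toE D‖ := norm_sub_le _ _
        _ = |1 - μ| * frobNorm Y + frobNorm D := by
            rw [norm_smul, Real.norm_eq_abs, frobNorm_eq, frobNorm_eq]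
        _ ≤ |1 - μ| * frobNorm Y + μ * δ * frobNorm Y := by linarith
        _ = (|1 - μ| + μ * δ) * frobNorm Y := by ring
        _ ≤ max (μ * (1 + δ) - 1) (1 - μ * (1 - δ)) * frobNorm Y :=
            mul_le_mul_of_nonneg_right habs (by rw [frobNorm]; exact Real.sqrt_nonneg _)
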